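/- Let the valuation τ satisfy the clauses [X>X] → ⊥ for all variables X, [X>Y] ∧ [Y>Z] → [X>Z] for all variables X,Y,Z, and [X ⊑ ∃r.Y] → [X>Y] for all variables X,Y and existential atoms ∃r.Y. Define the assignment S^τ by S^τ_X := {D non-variable atom | τ([X ⊑ D]) = 1}, and let >_{S^τ} be the transitive closure of {(X,Y) | Y occurs in an atom of S^τ_X}. Then >_{S^τ} is irreflexive. -/
import Mathlib


inductive EL (N R : Type) : Type where
  | name : N → EL N R
  | top  : EL N R
  | conj : EL N R → EL N R → EL N R
  | ex   : R → EL N R → EL N R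

structure Interp (N R : Type) where
  dom : Type
  nonempty : Nonempty dom
  cname : N → Set dom
  role : R → Set (dom × dom)

def Interp.sem {N R : Type} (I : Interp N R) : EL N R → Set I.dom
  | .name A => I.cname A
  | .top => Set.univ
  | .conj C D => I.sem C ∩ I.sem D
  | .ex r C => {x | ∃ y, (x, y) ∈ I.role r ∧ y ∈ I.sem C}

/-- Semantic subsumption: `C ⊑ D` iff `C^I ⊆ D^I` for every interpretation `I`. -/
def Subsume {N R : Type} (C D : EL N R) : Prop :=
  ∀ I : Interp N R, I.sem C ⊆ I.sem D

/-- An atom is a concept name or an existential restriction. -/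
def IsAtomEL {N R : Type} : EL N R → Prop
  | .name _ => True
  | .ex _ _ => True
  | _ => False

/-- Top-level atoms of a concept term. -/
def tla {N R : Type} : EL N R → List (EL N R)
  | .conj C D => tla C ++ tla D
  | .top => []
  | .name A => [EL.name A]
  | .ex r C => [EL.ex r C]

/-- Conjunction of a nonempty list of terms `C :: Cs` (no extra ⊤ conjunct). -/
def conjs {N R : Type} : EL N R → List (EL N R) → EL N R
  | C, [] => C
  | C, D :: Ds => .conj C (conjs D Ds)

/-- Conjunction of a list of terms; the empty conjunction is ⊤. -/
def conjList {N R : Type} : List (EL N R) → EL N R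
  | [] => .top
  | C :: Cs => conjs C Cs

/-- Symbol count: each concept name (and ⊤) is one symbol, each `∃r.` is one symbol. -/
def sizeEL {N R : Type} : EL N R → ℕ
  | .name _ => 1
  | .top => 1
  | .conj C D => sizeEL C + sizeEL D + 1
  | .ex _ C => sizeEL C + 1

/-- Groundness: no occurrence of a variable (names are `V ⊕ K`, variables on the left). -/
def isGround {V K R : Type} : EL (V ⊕ K) R → Prop
  | .name (Sum.inl _) => False
  | .name (Sum.inr _) => True
  | .top => True
  | .conj C D => isGround C ∧ isGround D
  | .ex _ C => isGround C

/-- Application of a substitution `σ : V → EL (V ⊕ K) R` to a concept term. -/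
def applySub {V K R : Type} (σ : V → EL (V ⊕ K) R) : EL (V ⊕ K) R → EL (V ⊕ K) R
  | .name (Sum.inl X) => σ X
  | .name (Sum.inr A) => .name (Sum.inr A)
  | .top => .top
  | .conj C D => .conj (applySub σ C) (applySub σ D)
  | .ex r C => .ex r (applySub σ C)

/-- The variable `Y` occurs in the concept term. -/
def occursVar {V K R : Type} (Y : V) : EL (V ⊕ K) R → Prop
  | .name (Sum.inl X) => X = Y
  | .name (Sum.inr _) => False
  | .top => False
  | .conj C D => occursVar Y C ∨ occursVar Y D
  | .ex _ C => occursVar Y C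

theorem stmt16 {V K R : Type}
    (At : Set (EL (V ⊕ K) R))
    (τP : EL (V ⊕ K) R → EL (V ⊕ K) R → Bool) (τG : V → V → Bool)
    (h1 : ∀ X : V, τG X X = false)
    (h2 : ∀ X Y Z : V, τG X Y = true → τG Y Z = true → τG X Z = true)
    (h3 : ∀ (X Y : V) (r : R), EL.ex r (EL.name (Sum.inl Y)) ∈ At →
      τP (EL.name (Sum.inl X)) (EL.ex r (EL.name (Sum.inl Y))) = true → τG X Y = true) :
    ∀ X : V, ¬ Relation.TransGen (fun X Y : V => ∃ r : R,
      EL.ex r (EL.name (Sum.inl Y)) ∈ At ∧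
      τP (EL.name (Sum.inl X)) (EL.ex r (EL.name (Sum.inl Y))) = true) X X := by
  intro X h
  have key : ∀ a b : V, Relation.TransGen (fun X Y : V => ∃ r : R,
      EL.ex r (EL.name (Sum.inl Y)) ∈ At ∧
      τP (EL.name (Sum.inl X)) (EL.ex r (EL.name (Sum.inl Y))) = true) a b → τG a b = true := by
    intro a b hab
    induction hab with
    | single h => obtain ⟨r, hm, hp⟩ := h; exact h3 _ _ r hm hp
    | tail _ h ih => obtain ⟨r, hm, hp⟩ := h; exact h2 _ _ _ ih (h3 _ _ r hm hp)
  have := key X X h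
  simp [h1 X] at this
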